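/- arXiv:2103.10803 — 6 statements merged into one kernel-verified Lean document; each statement's English description precedes it below -/
import Mathlib

section
/- For the Binary Erasure Channel, the Bhattacharyya parameter of the synthetic channel corresponding to the monomial x₁x₂ in 4 variables is pointwise at most that of x₀x₃: for all p ∈ [0,1], (1 - (1 - p²)⁴)² ≤ 1 - (1 - (1 - (1-p)²)⁴)². -/
/-- For the BEC, the Bhattacharyya parameter of the synthetic channel of monomial
`x₁x₂` (vector `(0,1,1,0)`) is pointwise at most that of `x₀x₃` (vector `(1,0,0,1)`). -/
theorem bec_x1x2_le_x0x3 :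
    ∀ p ∈ Set.Icc (0:ℝ) 1,
      (1 - (1 - p^2)^4)^2 ≤ 1 - (1 - (1 - (1 - p)^2)^4)^2 := by
  rintro p ⟨h0, h1⟩
  have hq : (0:ℝ) ≤ 1 - p := by linarith
  have key : (1 - (1 - (1 - (1 - p)^2)^4)^2) - (1 - (1 - p^2)^4)^2
      = p^4 * (1 - p)^4 * (16 + p^3 * (1 - p)^3 * (48 - 2*p + 2*p^2)) := by
    ring
  have h2 : (0:ℝ) ≤ 48 - 2*p + 2*p^2 := by nlinarith
  have h3 : (0:ℝ) ≤ p^3 * (1 - p)^3 * (48 - 2*p + 2*p^2) :=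
    mul_nonneg (mul_nonneg (pow_nonneg h0 3) (pow_nonneg hq 3)) h2
  have h4 : (0:ℝ) ≤ p^4 * (1 - p)^4 * (16 + p^3 * (1 - p)^3 * (48 - 2*p + 2*p^2)) :=
    mul_nonneg (mul_nonneg (pow_nonneg h0 4) (pow_nonneg hq 4)) (by linarith)
  linarith
end

section
/- For positive integers l, w, n with n = wl, and for any i with l ≤ i ≤ n, the coefficient of the Bernstein expansion of 1-(1-p^l)^w satisfies: 1-(1-p^l)^w = ∑_{i=l}^{n} (∑_{j=1}^{⌊i/l⌋} (-1)^{j+1} C(w,j) C(n-jl, n-i)) p^i (1-p)^{n-i}. -/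
open Finset

/-- Bernstein expansion of the reliability polynomial of `w` parallel chains of `l`
devices each (`n = wl`): inclusion-exclusion formula for the path counts. -/
theorem bernstein_expansion_parallel_chains (w l : ℕ) (hw : 0 < w) (hl : 0 < l)
    (p : ℝ) :
    1 - (1 - p ^ l) ^ w
      = ∑ i ∈ Icc l (w * l),
          (∑ j ∈ Icc 1 (i / l),
            (-1 : ℝ) ^ (j + 1) * (w.choose j : ℝ) * ((w * l - j * l).choose (w * l - i) : ℝ))
          * p ^ i * (1 - p) ^ (w * l - i) := by
  -- Step 1: binomial expansion of (1 - p^l)^w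
  have step1 : 1 - (1 - p ^ l) ^ w
      = ∑ j ∈ Icc 1 w, (-1 : ℝ) ^ (j + 1) * (w.choose j : ℝ) * p ^ (j * l) := by
    have h : (1 - p ^ l) ^ w = ∑ j ∈ range (w + 1),
        (-1 : ℝ) ^ j * (w.choose j : ℝ) * p ^ (j * l) := by
      have := add_pow (-(p ^ l)) 1 w
      rw [show -(p ^ l) + 1 = 1 - p ^ l by ring] at this
      rw [this]
      refine Finset.sum_congr rfl fun j hj => ?_
      rw [neg_pow, ← pow_mul]
      ring
    have hsplit : ∑ j ∈ range (w + 1), (-1 : ℝ) ^ j * (w.choose j : ℝ) * p ^ (j * l)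
        = 1 + ∑ j ∈ Icc 1 w, (-1 : ℝ) ^ j * (w.choose j : ℝ) * p ^ (j * l) := by
      rw [Finset.range_eq_Ico, Finset.sum_eq_sum_Ico_succ_bot (Nat.succ_pos w),
        Nat.succ_eq_add_one, Finset.Ico_add_one_right_eq_Icc]
      simp
    rw [h, hsplit]
    have hterm : ∀ j ∈ Icc 1 w, (-1 : ℝ) ^ (j + 1) * (w.choose j : ℝ) * p ^ (j * l)
        = -((-1 : ℝ) ^ j * (w.choose j : ℝ) * p ^ (j * l)) := by
      intro j hj; rw [pow_succ]; ring
    rw [Finset.sum_congr rfl hterm, Finset.sum_neg_distrib]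
    ring
  -- Step 2: Bernstein expansion of p^(j*l)
  have step2 : ∀ j ∈ Icc 1 w, p ^ (j * l)
      = ∑ i ∈ Icc (j * l) (w * l),
          ((w * l - j * l).choose (w * l - i) : ℝ) * p ^ i * (1 - p) ^ (w * l - i) := by
    intro j hj
    have hjw : j ≤ w := (mem_Icc.mp hj).2
    have hle : j * l ≤ w * l := Nat.mul_le_mul_right l hjw
    set M := w * l - j * l with hM
    have hrange : w * l + 1 - j * l = M + 1 := by omega
    rw [← Finset.Ico_add_one_right_eq_Icc, Finset.sum_Ico_eq_sum_range, hrange]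
    have hterm : ∀ k ∈ range (M + 1),
        ((w * l - j * l).choose (w * l - (j * l + k)) : ℝ) * p ^ (j * l + k)
          * (1 - p) ^ (w * l - (j * l + k))
        = p ^ (j * l) * (p ^ k * (1 - p) ^ (M - k) * (M.choose k : ℝ)) := by
      intro k hk
      have hkM : k ≤ M := Nat.lt_succ_iff.mp (mem_range.mp hk)
      have h1 : w * l - (j * l + k) = M - k := by omega
      have h2 : M.choose (M - k) = M.choose k := Nat.choose_symm hkM
      rw [h1, ← hM, h2, pow_add]
      ring
    rw [Finset.sum_congr rfl hterm, ← Finset.mul_sum, ← add_pow p (1 - p) M]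
    rw [show p + (1 - p) = 1 by ring, one_pow, mul_one]
  rw [step1, Finset.sum_congr rfl (fun j hj => by rw [step2 j hj] :
    ∀ j ∈ Icc 1 w, (-1 : ℝ) ^ (j + 1) * (w.choose j : ℝ) * p ^ (j * l)
      = (-1 : ℝ) ^ (j + 1) * (w.choose j : ℝ) *
        ∑ i ∈ Icc (j * l) (w * l),
          ((w * l - j * l).choose (w * l - i) : ℝ) * p ^ i * (1 - p) ^ (w * l - i))]
  -- pull constants inside and swap the order of summation
  have hswap :
      ∑ j ∈ Icc 1 w, (-1 : ℝ) ^ (j + 1) * (w.choose j : ℝ) *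
        ∑ i ∈ Icc (j * l) (w * l),
          ((w * l - j * l).choose (w * l - i) : ℝ) * p ^ i * (1 - p) ^ (w * l - i)
      = ∑ i ∈ Icc l (w * l), ∑ j ∈ Icc 1 (i / l),
          (-1 : ℝ) ^ (j + 1) * (w.choose j : ℝ) *
            (((w * l - j * l).choose (w * l - i) : ℝ) * p ^ i * (1 - p) ^ (w * l - i)) := by
    rw [Finset.sum_congr rfl (fun j _ => Finset.mul_sum _ _ _)]
    refine Finset.sum_comm' ?_
    intro j i
    simp only [mem_Icc]
    constructor
    · rintro ⟨⟨hj1, hjw⟩, hji, hiw⟩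
      refine ⟨⟨hj1, (Nat.le_div_iff_mul_le hl).mpr hji⟩, ?_, hiw⟩
      calc l = 1 * l := (one_mul l).symm
        _ ≤ j * l := Nat.mul_le_mul_right l hj1
        _ ≤ i := hji
    · rintro ⟨⟨hj1, hjd⟩, hli, hiw⟩
      have hji : j * l ≤ i := (Nat.le_div_iff_mul_le hl).mp hjd
      exact ⟨⟨hj1, Nat.le_of_mul_le_mul_right (hji.trans hiw) hl⟩, hji, hiw⟩
  rw [hswap]
  refine Finset.sum_congr rfl fun i hi => ?_
  rw [Finset.sum_mul, Finset.sum_mul]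
  refine Finset.sum_congr rfl fun j hj => ?_
  ring
end

section
/- With a(m) = C(2^i + 2^{i-m}, 2^i) interpreted as the generalized binomial coefficient ∏_{j=1}^{2^i} (j + 2^{i-m})/j, the average reliability Avr(W^{(1^i 0^{m-i})}) = 1 - 1/a(m) tends to 0 as m → ∞ whenever i = i(m) ≤ m - log₂(m) - log₂(log₂(m)). -/
open Finset Filter

private lemma one_sub_sum_le_prod_aux (a : ℕ → ℝ) (s : Finset ℕ)
    (h0 : ∀ j ∈ s, 0 ≤ a j) (h1 : ∀ j ∈ s, a j ≤ 1) :
    1 - ∑ j ∈ s, (1 - a j) ≤ ∏ j ∈ s, a j := by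
  classical
  induction s using Finset.induction_on with
  | empty => simp
  | @insert k s hk ih =>
    rw [Finset.sum_insert hk, Finset.prod_insert hk]
    have hP1 : ∏ j ∈ s, a j ≤ 1 :=
      Finset.prod_le_one (fun j hj => h0 j (mem_insert_of_mem hj))
        (fun j hj => h1 j (mem_insert_of_mem hj))
    have hS := ih (fun j hj => h0 j (mem_insert_of_mem hj))
      (fun j hj => h1 j (mem_insert_of_mem hj))
    have hak0 := h0 k (mem_insert_self k s)
    have hak1 := h1 k (mem_insert_self k s)
    nlinarith [mul_le_mul_of_nonneg_left hP1 (by linarith : (0:ℝ) ≤ 1 - a k)]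

/-- If `i(m) ≤ m - log₂ m - log₂ log₂ m`, then the average reliability
`Avr(W^{(1^i 0^{m-i})}) = 1 - ∏_{j=1}^{2^i} jl/(jl+1)` (with `l = 2^{m-i}`)
tends to `0` as `m → ∞`. -/
theorem avr_tendsto_zero (i : ℕ → ℕ) (hle : ∀ m, i m ≤ m)
    (h : ∀ m, (i m : ℝ) ≤ (m : ℝ) - Real.logb 2 m - Real.logb 2 (Real.logb 2 m)) :
    Tendsto
      (fun m => 1 - ∏ j ∈ Icc 1 ((2 : ℕ) ^ i m),
        ((j : ℝ) * 2 ^ (m - i m)) / ((j : ℝ) * 2 ^ (m - i m) + 1))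
      atTop (nhds 0) := by
  -- the dominating sequence
  set g : ℕ → ℝ := fun m => ((1 + (m:ℝ)) / m) / Real.logb 2 m with hg_def
  have hgto : Tendsto g atTop (nhds 0) := by
    have hnum : Tendsto (fun m : ℕ => (1 + (m:ℝ)) / m) atTop (nhds 1) := by
      have h1 : Tendsto (fun m : ℕ => 1 / (m:ℝ) + 1) atTop (nhds (0 + 1)) :=
        tendsto_one_div_atTop_nhds_zero_nat.add tendsto_const_nhds
      rw [(by norm_num : (0:ℝ) + 1 = 1)] at h1
      refine h1.congr' ?_
      filter_upwards [eventually_ge_atTop 1] with m hm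
      have hm0 : (m:ℝ) ≠ 0 := by positivity
      field_simp
    have hden : Tendsto (fun m : ℕ => Real.logb 2 (m:ℝ)) atTop atTop :=
      (Real.tendsto_logb_atTop (by norm_num)).comp tendsto_natCast_atTop_atTop
    exact hnum.div_atTop hden
  refine tendsto_of_tendsto_of_tendsto_of_le_of_le' tendsto_const_nhds hgto ?_ ?_
  · -- lower bound : 0 ≤ 1 - P
    filter_upwards with m
    have hP1 : (∏ j ∈ Icc 1 ((2 : ℕ) ^ i m),
        ((j : ℝ) * 2 ^ (m - i m)) / ((j : ℝ) * 2 ^ (m - i m) + 1)) ≤ 1 := by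
      apply Finset.prod_le_one
      · intro j _; positivity
      · intro j _
        rw [div_le_one (by positivity)]
        linarith
    linarith
  · -- upper bound
    filter_upwards [eventually_ge_atTop 2] with m hm
    set w : ℕ := (2 : ℕ) ^ i m with hw_def
    set l : ℝ := (2:ℝ) ^ (m - i m) with hl_def
    have hl0 : (0:ℝ) < l := by positivity
    have hm0 : (0:ℝ) < m := by
      have : (2:ℝ) ≤ m := by exact_mod_cast hm
      linarith
    have hL1 : (1:ℝ) ≤ Real.logb 2 m := by
      have : Real.logb 2 2 ≤ Real.logb 2 m :=
        Real.logb_le_logb_of_le (by norm_num) (by norm_num) (by exact_mod_cast hm)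
      rwa [Real.logb_self_eq_one (by norm_num)] at this
    have hL0 : (0:ℝ) < Real.logb 2 m := by linarith
    -- l ≥ m * logb 2 m
    have hml : (m:ℝ) * Real.logb 2 m ≤ l := by
      have hcast : ((m - i m : ℕ) : ℝ) = (m:ℝ) - i m := by
        rw [Nat.cast_sub (hle m)]
      have hexp : Real.logb 2 m + Real.logb 2 (Real.logb 2 m) ≤ ((m - i m : ℕ) : ℝ) := by
        rw [hcast]; linarith [h m]
      calc (m:ℝ) * Real.logb 2 m
          = (2:ℝ) ^ (Real.logb 2 (m:ℝ)) * (2:ℝ) ^ (Real.logb 2 (Real.logb 2 (m:ℝ))) := by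
            rw [Real.rpow_logb (by norm_num) (by norm_num) hm0,
              Real.rpow_logb (by norm_num) (by norm_num) hL0]
        _ = (2:ℝ) ^ (Real.logb 2 (m:ℝ) + Real.logb 2 (Real.logb 2 (m:ℝ))) := by
            rw [Real.rpow_add (by norm_num)]
        _ ≤ (2:ℝ) ^ (((m - i m : ℕ) : ℝ)) :=
            Real.rpow_le_rpow_of_exponent_le (by norm_num) hexp
        _ = l := by rw [Real.rpow_natCast]
    -- 1 - P ≤ ∑ 1/(j l + 1)
    have hstep1 : 1 - (∏ j ∈ Icc 1 w, ((j : ℝ) * l) / ((j : ℝ) * l + 1))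
        ≤ ∑ j ∈ Icc 1 w, (1 / ((j:ℝ) * l + 1)) := by
      have haux := one_sub_sum_le_prod_aux (fun j => ((j : ℝ) * l) / ((j : ℝ) * l + 1))
        (Icc 1 w) (fun j _ => by positivity)
        (fun j _ => by rw [div_le_one (by positivity)]; linarith)
      have hsum_eq : ∑ j ∈ Icc 1 w, (1 - ((j : ℝ) * l) / ((j : ℝ) * l + 1))
          = ∑ j ∈ Icc 1 w, (1 / ((j:ℝ) * l + 1)) := by
        refine Finset.sum_congr rfl fun j _ => ?_
        have hx : (j:ℝ) * l + 1 ≠ 0 := by positivity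
        field_simp
        ring
      rw [hsum_eq] at haux
      linarith
    -- ∑ 1/(j l + 1) ≤ (harmonic w) / l ≤ (1 + m)/l
    have hstep2 : ∑ j ∈ Icc 1 w, (1 / ((j:ℝ) * l + 1))
        ≤ (∑ j ∈ Icc 1 w, ((j:ℝ))⁻¹) * l⁻¹ := by
      rw [Finset.sum_mul]
      refine Finset.sum_le_sum fun j hj => ?_
      have hj1 : 1 ≤ j := (Finset.mem_Icc.mp hj).1
      have hjpos : (0:ℝ) < j := by exact_mod_cast hj1
      rw [← mul_inv, ← one_div]
      apply one_div_le_one_div_of_le (by positivity)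
      linarith
    have hharm : (∑ j ∈ Icc 1 w, ((j:ℝ))⁻¹) ≤ 1 + (m:ℝ) := by
      have h1 : (∑ j ∈ Icc 1 w, ((j:ℝ))⁻¹) = ((harmonic w : ℚ) : ℝ) := by
        rw [harmonic_eq_sum_Icc]
        push_cast
        rfl
      rw [h1]
      refine (harmonic_le_one_add_log w).trans ?_
      have hlogw : Real.log w = (i m : ℝ) * Real.log 2 := by
        rw [hw_def]; push_cast; rw [Real.log_pow]
      have hlog2 : Real.log 2 < 1 := by
        have := Real.log_two_lt_d9; linarith
      have him : (i m : ℝ) ≤ m := by exact_mod_cast hle m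
      rw [hlogw]
      nlinarith [Real.log_nonneg (show (1:ℝ) ≤ 2 by norm_num)]
    have hfinal : (∑ j ∈ Icc 1 w, ((j:ℝ))⁻¹) * l⁻¹ ≤ g m := by
      have h1 : (∑ j ∈ Icc 1 w, ((j:ℝ))⁻¹) * l⁻¹ ≤ (1 + (m:ℝ)) / l := by
        rw [div_eq_mul_inv]
        apply mul_le_mul_of_nonneg_right hharm (by positivity)
      refine h1.trans ?_
      simp only [hg_def]
      rw [div_div]
      exact div_le_div_of_nonneg_left (by linarith) (mul_pos hm0 hL0) hml
    calc 1 - (∏ j ∈ Icc 1 w, ((j : ℝ) * l) / ((j : ℝ) * l + 1))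
        ≤ ∑ j ∈ Icc 1 w, (1 / ((j:ℝ) * l + 1)) := hstep1
      _ ≤ (∑ j ∈ Icc 1 w, ((j:ℝ))⁻¹) * l⁻¹ := hstep2
      _ ≤ g m := hfinal
end

section
/- With w(n) = n/log₂(n) and l(n) = log₂(n), the product ∏_{j=1}^{⌊w(n)⌋} (jl(n)+1)/(jl(n)) tends to 2 as n → ∞. -/
open Finset Filter

lemma core_limit : Tendsto (fun n : ℕ => Real.log ((n : ℝ) / Real.logb 2 n) / Real.logb 2 n)
    atTop (nhds (Real.log 2)) := by
  have L1 : Tendsto (fun n : ℕ => Real.log (Real.log n) / Real.log n) atTop (nhds 0) :=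
    Real.isLittleO_log_id_atTop.tendsto_div_nhds_zero.comp
      (Real.tendsto_log_atTop.comp tendsto_natCast_atTop_atTop)
  have L2 : Tendsto (fun n : ℕ => Real.log (Real.log 2) / Real.log n) atTop (nhds 0) := by
    have := ((Real.tendsto_log_atTop.comp
      tendsto_natCast_atTop_atTop).inv_tendsto_atTop).const_mul (Real.log (Real.log 2))
    simp only [mul_zero] at this
    exact this.congr (fun n => by simp [div_eq_mul_inv, Function.comp])
  have h : Tendsto (fun n : ℕ => Real.log 2 *
      (1 - Real.log (Real.log n) / Real.log n + Real.log (Real.log 2) / Real.log n))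
      atTop (nhds (Real.log 2)) := by
    have := (((tendsto_const_nhds (x := (1:ℝ))).sub L1).add L2).const_mul (Real.log 2)
    simpa using this
  refine h.congr' ?_
  filter_upwards [eventually_ge_atTop 3] with n hn
  have hn3 : (3 : ℝ) ≤ (n : ℝ) := by exact_mod_cast hn
  have hlogn : 1 < Real.log n := by
    have : Real.exp 1 < 3 := by
      have := Real.exp_one_lt_d9; linarith
    rw [show (1:ℝ) = Real.log (Real.exp 1) by rw [Real.log_exp]]
    exact Real.log_lt_log (Real.exp_pos 1) (by linarith)
  have hlog2 : 0 < Real.log 2 := Real.log_pos (by norm_num)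
  have hlogn0 : Real.log n ≠ 0 := by linarith
  have hl : Real.logb 2 n = Real.log n / Real.log 2 := rfl
  have hlpos : 0 < Real.logb 2 n := by rw [hl]; positivity
  have hnpos : (0:ℝ) < n := by linarith
  rw [hl, Real.log_div (ne_of_gt hnpos) (by positivity),
    Real.log_div hlogn0 (ne_of_gt hlog2)]
  field_simp
  ring


lemma logb_atTop : Tendsto (fun n : ℕ => Real.logb 2 n) atTop atTop :=
  (Real.tendsto_logb_atTop (by norm_num)).comp tendsto_natCast_atTop_atTop

-- basic facts for n ≥ 16
lemma basic_facts {n : ℕ} (hn : 16 ≤ n) :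
    2 ≤ Real.logb 2 n ∧ Real.logb 2 n ≤ n ∧ 1 ≤ ⌊(n : ℝ) / Real.logb 2 n⌋₊ := by
  have hn16 : (16 : ℝ) ≤ (n : ℝ) := by exact_mod_cast hn
  have hlog2 : 0 < Real.log 2 := Real.log_pos (by norm_num)
  have hl : Real.logb 2 n = Real.log n / Real.log 2 := rfl
  have h4 : Real.log 4 ≤ Real.log n := Real.log_le_log (by norm_num) (by linarith)
  have h4' : Real.log 4 = 2 * Real.log 2 := by
    rw [show (4:ℝ) = 2 ^ 2 by norm_num, Real.log_pow]; push_cast; ring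
  have hl2 : 2 ≤ Real.logb 2 n := by
    rw [hl, le_div_iff₀ hlog2]; linarith
  have hpow : (n : ℝ) ≤ 2 ^ n := by
    have := Nat.lt_two_pow_self (n := n)
    exact_mod_cast this.le
  have hln : Real.logb 2 n ≤ n := by
    rw [hl, div_le_iff₀ hlog2]
    calc Real.log n ≤ Real.log (2 ^ n) := Real.log_le_log (by linarith) hpow
    _ = n * Real.log 2 := by rw [Real.log_pow]
  refine ⟨hl2, hln, ?_⟩
  rw [Nat.le_floor_iff (by positivity)]
  push_cast
  rw [le_div_iff₀ (by linarith)]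
  nlinarith

lemma Hl_limit : Tendsto (fun n : ℕ =>
    (harmonic ⌊(n : ℝ) / Real.logb 2 n⌋₊ : ℝ) / Real.logb 2 n) atTop (nhds (Real.log 2)) := by
  have hupper : Tendsto (fun n : ℕ =>
      (1 + Real.log ((n : ℝ) / Real.logb 2 n)) / Real.logb 2 n) atTop (nhds (Real.log 2)) := by
    have h1 : Tendsto (fun n : ℕ => (Real.logb 2 n)⁻¹) atTop (nhds 0) :=
      logb_atTop.inv_tendsto_atTop
    have h2 := h1.add core_limit
    rw [zero_add] at h2
    exact h2.congr fun n => by rw [add_div, one_div]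
  refine tendsto_of_tendsto_of_tendsto_of_le_of_le' core_limit hupper ?_ ?_
  · filter_upwards [eventually_ge_atTop 16] with n hn
    obtain ⟨hl2, hln, hw1⟩ := basic_facts hn
    set w := ⌊(n : ℝ) / Real.logb 2 n⌋₊
    have hlpos : (0:ℝ) < Real.logb 2 n := by linarith
    have hnl : (0:ℝ) < (n:ℝ) / Real.logb 2 n := by
      have : (16:ℝ) ≤ n := by exact_mod_cast hn
      positivity
    have h1 : Real.log ((n:ℝ) / Real.logb 2 n) ≤ Real.log (↑(w + 1)) := by
      apply Real.log_le_log hnl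
      push_cast
      exact (Nat.lt_floor_add_one _).le
    have h2 : Real.log (↑(w+1)) ≤ (harmonic w : ℝ) := log_add_one_le_harmonic w
    gcongr
    linarith
  · filter_upwards [eventually_ge_atTop 16] with n hn
    obtain ⟨hl2, hln, hw1⟩ := basic_facts hn
    set w := ⌊(n : ℝ) / Real.logb 2 n⌋₊
    have hlpos : (0:ℝ) < Real.logb 2 n := by linarith
    have h1 : (harmonic w : ℝ) ≤ 1 + Real.log w := harmonic_le_one_add_log w
    have h2 : Real.log w ≤ Real.log ((n:ℝ) / Real.logb 2 n) := by
      apply Real.log_le_log (by exact_mod_cast hw1)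
      exact Nat.floor_le (by positivity)
    gcongr
    linarith


lemma log_lb {x : ℝ} (hx : 0 < x) : x - x ^ 2 ≤ Real.log (1 + x) := by
  have h1 : Real.log (1 + x)⁻¹ ≤ (1 + x)⁻¹ - 1 := Real.log_le_sub_one_of_pos (by positivity)
  rw [Real.log_inv] at h1
  have h2 : x / (1 + x) ≤ Real.log (1 + x) := by
    have he : (1 + x)⁻¹ - 1 = -(x / (1 + x)) := by field_simp; ring
    rw [he] at h1; linarith
  have h3 : x - x ^ 2 ≤ x / (1 + x) := by
    rw [le_div_iff₀ (by positivity)]; nlinarith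
  linarith

lemma log_ub {x : ℝ} (hx : 0 < x) : Real.log (1 + x) ≤ x := by
  have := Real.log_le_sub_one_of_pos (show (0:ℝ) < 1 + x by positivity)
  linarith

lemma hH (w : ℕ) : (harmonic w : ℝ) = ∑ j ∈ Icc 1 w, ((j : ℝ))⁻¹ := by
  rw [harmonic_eq_sum_Icc]; push_cast; rfl

lemma S_limit : Tendsto (fun n : ℕ =>
    ∑ j ∈ Icc 1 ⌊(n : ℝ) / Real.logb 2 n⌋₊, Real.log (1 + 1 / ((j : ℝ) * Real.logb 2 n)))
    atTop (nhds (Real.log 2)) := by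
  have hlow : Tendsto (fun n : ℕ =>
      (harmonic ⌊(n : ℝ) / Real.logb 2 n⌋₊ : ℝ) / Real.logb 2 n * (1 - (Real.logb 2 n)⁻¹))
      atTop (nhds (Real.log 2)) := by
    have h1 : Tendsto (fun n : ℕ => (Real.logb 2 n)⁻¹) atTop (nhds 0) :=
      logb_atTop.inv_tendsto_atTop
    have := Hl_limit.mul ((tendsto_const_nhds (x := (1:ℝ))).sub h1)
    simpa using this
  refine tendsto_of_tendsto_of_tendsto_of_le_of_le' hlow Hl_limit ?_ ?_
  · filter_upwards [eventually_ge_atTop 16] with n hn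
    obtain ⟨hl2, hln, hw1⟩ := basic_facts hn
    set l := Real.logb 2 n with hldef
    set w := ⌊(n : ℝ) / l⌋₊ with hwdef
    have hlpos : (0:ℝ) < l := by linarith
    have key : ∀ j ∈ Icc 1 w, (0:ℝ) < 1 / (j * l) := by
      intro j hj
      have hj1 : 1 ≤ j := (mem_Icc.mp hj).1
      have : (1:ℝ) ≤ j := by exact_mod_cast hj1
      positivity
    have e1 : ∑ j ∈ Icc 1 w, 1 / ((j : ℝ) * l) = (harmonic w : ℝ) / l := by
      rw [hH, sum_div]
      refine sum_congr rfl fun j hj => ?_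
      have hj1 : (1:ℝ) ≤ j := by exact_mod_cast (mem_Icc.mp hj).1
      field_simp
    have e2 : ∑ j ∈ Icc 1 w, (1 / ((j : ℝ) * l)) ^ 2 ≤ (harmonic w : ℝ) / l ^ 2 := by
      rw [hH, sum_div]
      refine sum_le_sum fun j hj => ?_
      have hj1 : (1:ℝ) ≤ j := by exact_mod_cast (mem_Icc.mp hj).1
      have hr : (1 / ((j : ℝ) * l)) ^ 2 = 1 / ((j:ℝ) ^ 2 * l ^ 2) := by ring
      have hr2 : ((j:ℝ))⁻¹ / l ^ 2 = 1 / ((j:ℝ) * l ^ 2) := by ring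
      rw [hr, hr2]
      apply one_div_le_one_div_of_le (by positivity)
      nlinarith [mul_nonneg (mul_nonneg (sub_nonneg.mpr hj1) (by linarith : (0:ℝ) ≤ (j:ℝ))) (sq_nonneg l)]
    have step : ∀ j ∈ Icc 1 w,
        1 / ((j : ℝ) * l) - (1 / ((j : ℝ) * l)) ^ 2 ≤ Real.log (1 + 1 / ((j : ℝ) * l)) :=
      fun j hj => log_lb (key j hj)
    calc (harmonic w : ℝ) / l * (1 - l⁻¹)
        = (harmonic w : ℝ) / l - (harmonic w : ℝ) / l ^ 2 := by ring
      _ ≤ ∑ j ∈ Icc 1 w, (1 / ((j : ℝ) * l) - (1 / ((j : ℝ) * l)) ^ 2) := by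
          rw [sum_sub_distrib, ← e1]; linarith
      _ ≤ _ := sum_le_sum step
  · filter_upwards [eventually_ge_atTop 16] with n hn
    obtain ⟨hl2, hln, hw1⟩ := basic_facts hn
    set l := Real.logb 2 n with hldef
    set w := ⌊(n : ℝ) / l⌋₊ with hwdef
    have hlpos : (0:ℝ) < l := by linarith
    have e1 : ∑ j ∈ Icc 1 w, 1 / ((j : ℝ) * l) = (harmonic w : ℝ) / l := by
      rw [hH, sum_div]
      refine sum_congr rfl fun j hj => ?_
      have hj1 : (1:ℝ) ≤ j := by exact_mod_cast (mem_Icc.mp hj).1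
      field_simp
    rw [← e1]
    refine sum_le_sum fun j hj => ?_
    have hj1 : (1:ℝ) ≤ j := by exact_mod_cast (mem_Icc.mp hj).1
    exact log_ub (by positivity)

/-- With `w(n) = n/log₂ n` and `l(n) = log₂ n`, the generalized binomial coefficient
`∏_{j=1}^{⌊w(n)⌋} (jl(n)+1)/(jl(n))` tends to `2` as `n → ∞`. -/
theorem gen_binom_tendsto_two :
    Tendsto
      (fun n : ℕ =>
        ∏ j ∈ Icc 1 ⌊(n : ℝ) / Real.logb 2 n⌋₊,
          ((j : ℝ) * Real.logb 2 n + 1) / ((j : ℝ) * Real.logb 2 n))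
      atTop (nhds 2) := by
  have hexp : Tendsto (fun n : ℕ => Real.exp
      (∑ j ∈ Icc 1 ⌊(n : ℝ) / Real.logb 2 n⌋₊, Real.log (1 + 1 / ((j : ℝ) * Real.logb 2 n))))
      atTop (nhds 2) := by
    have := (Real.continuous_exp.tendsto _).comp S_limit
    rwa [Real.exp_log (by norm_num : (0:ℝ) < 2)] at this
  refine hexp.congr' ?_
  filter_upwards [eventually_ge_atTop 16] with n hn
  obtain ⟨hl2, hln, hw1⟩ := basic_facts hn
  set l := Real.logb 2 n with hldef
  set w := ⌊(n : ℝ) / l⌋₊ with hwdef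
  have hlpos : (0:ℝ) < l := by linarith
  rw [Real.exp_sum]
  refine prod_congr rfl fun j hj => ?_
  have hj1 : (1:ℝ) ≤ j := by exact_mod_cast (mem_Icc.mp hj).1
  have hx : (0:ℝ) < 1 / ((j:ℝ) * l) := by positivity
  rw [Real.exp_log (by linarith)]
  field_simp
end

section
/- Let f and g be squarefree monomials of the same degree s with index sequences i₁<⋯<i_s and j₁<⋯<j_s, and let h be an index not occurring in either f or g. Then f ⪯_d g if and only if x_h·f ⪯_d x_h·g, where ⪯_d is the dominance order on the sorted index sequences. -/
open Finset

/-- Dominance order on monomials identified with finite index sets: all suffix sums of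
the increasingly sorted index list of `f` are dominated by those of `g`. -/
def DomF (s : ℕ) (f g : Finset ℕ) : Prop :=
  ∀ ℓ < s, ((f.sort (· ≤ ·)).drop (s - (ℓ + 1))).sum
      ≤ ((g.sort (· ≤ ·)).drop (s - (ℓ + 1))).sum

private lemma key_list {M L : List ℕ} (hM : List.Sublist M L) (hL : L.Pairwise (· ≤ ·)) :
    M.sum ≤ (L.drop (L.length - M.length)).sum := by
  induction hM with
  | slnil => simp
  | cons a hsub ih =>
    rename_i l₁ l₂
    have hlen : l₁.length ≤ l₂.length := hsub.length_le
    have harith : (a :: l₂).length - l₁.length = (l₂.length - l₁.length) + 1 := by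
      simp; omega
    rw [harith, List.drop_succ_cons]
    exact ih hL.of_cons
  | cons_cons a hsub ih =>
    rename_i l₁ l₂
    have hlen : l₁.length ≤ l₂.length := hsub.length_le
    have hle : ∀ b ∈ l₂, a ≤ b := (List.pairwise_cons.mp hL).1
    have harith : (a :: l₂).length - (a :: l₁).length = l₂.length - l₁.length := by
      simp
    rw [harith]
    rcases Nat.eq_zero_or_pos (l₂.length - l₁.length) with hd | hd
    · rw [hd, List.drop_zero, List.sum_cons, List.sum_cons]
      exact Nat.add_le_add_left (hsub.sum_le_sum (by simp)) a
    · set d := l₂.length - l₁.length with hddef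
      have hlt : d - 1 < l₂.length := by omega
      have h1 : (a :: l₂).drop d = l₂.drop (d - 1) := by
        obtain ⟨e, he⟩ : ∃ e, d = e + 1 := ⟨d - 1, by omega⟩
        rw [he, List.drop_succ_cons]; simp
      rw [h1, List.drop_eq_getElem_cons hlt, List.sum_cons, List.sum_cons,
        show d - 1 + 1 = d by omega]
      exact Nat.add_le_add (hle _ (l₂.getElem_mem hlt)) (ih hL.of_cons)

/-- Sum of the `k` largest elements of `A`. -/
private def T (k : ℕ) (A : Finset ℕ) : ℕ := ((A.sort (· ≤ ·)).drop (A.card - k)).sum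

private lemma T_zero (A : Finset ℕ) : T 0 A = 0 := by
  unfold T
  have h1 : A.card = (A.sort (· ≤ ·)).length := (Finset.length_sort _).symm
  rw [Nat.sub_zero, h1, List.drop_length]
  rfl

private lemma sum_le_T {A B : Finset ℕ} (hBA : B ⊆ A) :
    (∑ x ∈ B, x) ≤ T B.card A := by
  have hsub : List.Sublist (B.sort (· ≤ ·)) (A.sort (· ≤ ·)) := by
    apply List.sublist_of_subperm_of_pairwise _ (Finset.pairwise_sort _ _) (Finset.pairwise_sort _ _)
    exact List.subperm_of_subset (Finset.sort_nodup _ _)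
      (fun x hx => (Finset.mem_sort _).mpr (hBA ((Finset.mem_sort _).mp hx)))
  have hsum : ∑ x ∈ B, x = (B.sort (· ≤ ·)).sum := by
    have h1 := List.sum_toFinset (fun x => x) (Finset.sort_nodup B (· ≤ ·))
    simpa using h1
  have := key_list hsub (Finset.pairwise_sort _ _)
  rw [Finset.length_sort, Finset.length_sort] at this
  rw [hsum]
  exact this

/-- The set of the `k` largest elements of `A`. -/
private def topC (k : ℕ) (A : Finset ℕ) : Finset ℕ :=
  ((A.sort (· ≤ ·)).drop (A.card - k)).toFinset

private lemma topC_nodup (k : ℕ) (A : Finset ℕ) :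
    ((A.sort (· ≤ ·)).drop (A.card - k)).Nodup :=
  (Finset.sort_nodup _ _).sublist (List.drop_sublist _ _)

private lemma topC_subset (k : ℕ) (A : Finset ℕ) : topC k A ⊆ A := by
  intro x hx
  have hx' : x ∈ (A.sort (· ≤ ·)).drop (A.card - k) := List.mem_toFinset.mp hx
  exact (Finset.mem_sort _).mp (List.drop_subset _ _ hx')

private lemma topC_card {k : ℕ} {A : Finset ℕ} (hk : k ≤ A.card) : (topC k A).card = k := by
  rw [topC, List.toFinset_card_of_nodup (topC_nodup k A), List.length_drop,
    Finset.length_sort]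
  omega

private lemma topC_sum (k : ℕ) (A : Finset ℕ) : (∑ x ∈ topC k A, x) = T k A := by
  have h1 := List.sum_toFinset (fun x => x) (topC_nodup k A)
  simpa [topC, T] using h1

private lemma topC_mono {k : ℕ} {A : Finset ℕ} (hk : k + 1 ≤ A.card) :
    topC k A ⊆ topC (k + 1) A := by
  intro x hx
  have hx' : x ∈ (A.sort (· ≤ ·)).drop (A.card - k) := List.mem_toFinset.mp hx
  have hsl : List.Sublist ((A.sort (· ≤ ·)).drop (A.card - k))
      ((A.sort (· ≤ ·)).drop (A.card - (k + 1))) := by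
    have h2 := List.drop_sublist 1 ((A.sort (· ≤ ·)).drop (A.card - (k + 1)))
    rwa [List.drop_drop, show (A.card - (k + 1)) + 1 = A.card - k from by omega] at h2
  exact List.mem_toFinset.mpr (hsl.subset hx')

private lemma core_forward (f g : Finset ℕ) (h k : ℕ) (hcard : g.card = f.card)
    (hhf : h ∉ f) (hhg : h ∉ g) (hk1 : 1 ≤ k) (hks : k ≤ f.card + 1)
    (hdom : ∀ j, 1 ≤ j → j ≤ f.card → T j f ≤ T j g) :
    T k (insert h f) ≤ T k (insert h g) := by
  have hFc : (insert h f).card = f.card + 1 := Finset.card_insert_of_notMem hhf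
  have hGc : (insert h g).card = g.card + 1 := Finset.card_insert_of_notMem hhg
  set B := topC k (insert h f) with hBdef
  have hBsub : B ⊆ insert h f := topC_subset _ _
  have hBcard : B.card = k := topC_card (by omega)
  have hBsum : (∑ x ∈ B, x) = T k (insert h f) := topC_sum _ _
  by_cases hB : h ∈ B
  · -- B contains h
    have herase : B.erase h ⊆ f := by
      intro x hx
      have hxB := Finset.mem_of_mem_erase hx
      have hxh := Finset.ne_of_mem_erase hx
      rcases Finset.mem_insert.mp (hBsub hxB) with h1 | h1
      · exact absurd h1 hxh
      · exact h1
    have hec : (B.erase h).card = k - 1 := by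
      rw [Finset.card_erase_of_mem hB, hBcard]
    have hs1 : (∑ x ∈ B.erase h, x) ≤ T (k - 1) f := by
      have := sum_le_T herase
      rwa [hec] at this
    have hs2 : T (k - 1) f ≤ T (k - 1) g := by
      rcases Nat.eq_zero_or_pos (k - 1) with h0 | h0
      · rw [h0, T_zero, T_zero]
      · exact hdom (k - 1) h0 (by omega)
    have hs3 : h + T (k - 1) g ≤ T k (insert h g) := by
      have hCg : topC (k - 1) g ⊆ g := topC_subset _ _
      have hCgc : (topC (k - 1) g).card = k - 1 := topC_card (by omega)
      have hhC : h ∉ topC (k - 1) g := fun hc => hhg (hCg hc)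
      have hins : insert h (topC (k - 1) g) ⊆ insert h g :=
        Finset.insert_subset_insert _ hCg
      have hinsc : (insert h (topC (k - 1) g)).card = k := by
        rw [Finset.card_insert_of_notMem hhC, hCgc]; omega
      have := sum_le_T hins
      rw [hinsc, Finset.sum_insert hhC, topC_sum] at this
      exact this
    have hsplit : h + (∑ x ∈ B.erase h, x) = ∑ x ∈ B, x := by
      have := Finset.add_sum_erase B (fun x => x) hB
      simpa using this
    omega
  · -- B does not contain h
    have hBf : B ⊆ f := by
      intro x hx
      rcases Finset.mem_insert.mp (hBsub hx) with h1 | h1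
      · exact absurd (h1 ▸ hx) hB
      · exact h1
    have hkf : k ≤ f.card := hBcard ▸ Finset.card_le_card hBf
    have hs1 : (∑ x ∈ B, x) ≤ T k f := by
      have := sum_le_T hBf
      rwa [hBcard] at this
    have hs2 : T k f ≤ T k g := hdom k hk1 hkf
    have hs3 : T k g ≤ T k (insert h g) := by
      have hCg : topC k g ⊆ insert h g := (topC_subset _ _).trans (Finset.subset_insert _ _)
      have hCgc : (topC k g).card = k := topC_card (by omega)
      have := sum_le_T hCg
      rwa [hCgc, topC_sum] at this
    omega

private lemma core_backward (f g : Finset ℕ) (h k : ℕ) (hcard : g.card = f.card)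
    (hhf : h ∉ f) (hhg : h ∉ g) (hk1 : 1 ≤ k) (hks : k ≤ f.card)
    (hdom : ∀ j, 1 ≤ j → j ≤ f.card + 1 → T j (insert h f) ≤ T j (insert h g)) :
    T k f ≤ T k g := by
  have hFc : (insert h f).card = f.card + 1 := Finset.card_insert_of_notMem hhf
  have hGc : (insert h g).card = g.card + 1 := Finset.card_insert_of_notMem hhg
  set C' := topC (k + 1) (insert h g) with hC'def
  have hC'sub : C' ⊆ insert h g := topC_subset _ _
  have hC'card : C'.card = k + 1 := topC_card (by omega)
  have hC'sum : (∑ x ∈ C', x) = T (k + 1) (insert h g) := topC_sum _ _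
  by_cases hC : h ∈ C'
  · -- h is among the k+1 largest of insert h g
    have hs1 : h + T k f ≤ T (k + 1) (insert h f) := by
      have hBf : topC k f ⊆ f := topC_subset _ _
      have hBc : (topC k f).card = k := topC_card (by omega)
      have hhB : h ∉ topC k f := fun hc => hhf (hBf hc)
      have hins : insert h (topC k f) ⊆ insert h f := Finset.insert_subset_insert _ hBf
      have hinsc : (insert h (topC k f)).card = k + 1 := by
        rw [Finset.card_insert_of_notMem hhB, hBc]
      have := sum_le_T hins
      rw [hinsc, Finset.sum_insert hhB, topC_sum] at this
      exact this
    have hs2 : T (k + 1) (insert h f) ≤ T (k + 1) (insert h g) :=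
      hdom (k + 1) (by omega) (by omega)
    have herase : C'.erase h ⊆ g := by
      intro x hx
      have hxB := Finset.mem_of_mem_erase hx
      have hxh := Finset.ne_of_mem_erase hx
      rcases Finset.mem_insert.mp (hC'sub hxB) with h1 | h1
      · exact absurd h1 hxh
      · exact h1
    have hec : (C'.erase h).card = k := by
      rw [Finset.card_erase_of_mem hC, hC'card]
      omega
    have hs3 : (∑ x ∈ C'.erase h, x) ≤ T k g := by
      have := sum_le_T herase
      rwa [hec] at this
    have hsplit : h + (∑ x ∈ C'.erase h, x) = ∑ x ∈ C', x := by
      have := Finset.add_sum_erase C' (fun x => x) hC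
      simpa using this
    omega
  · -- h is not among the k+1 largest of insert h g
    have hCk : topC k (insert h g) ⊆ C' := topC_mono (by omega)
    have hCg : topC k (insert h g) ⊆ g := by
      intro x hx
      rcases Finset.mem_insert.mp (topC_subset _ _ hx) with h1 | h1
      · exact absurd (h1 ▸ hx) (fun hc => hC (hCk hc))
      · exact h1
    have hCgc : (topC k (insert h g)).card = k := topC_card (by omega)
    have hs1 : T k f ≤ T k (insert h f) := by
      have hBf : topC k f ⊆ insert h f := (topC_subset _ _).trans (Finset.subset_insert _ _)
      have hBc : (topC k f).card = k := topC_card (by omega)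
      have := sum_le_T hBf
      rwa [hBc, topC_sum] at this
    have hs2 : T k (insert h f) ≤ T k (insert h g) := hdom k hk1 (by omega)
    have hs3 : T k (insert h g) ≤ T k g := by
      have := sum_le_T hCg
      rwa [hCgc, topC_sum] at this
    omega

/-- For equal-degree squarefree monomials `f, g` and a variable `x_h` dividing neither,
`f ⪯_d g ↔ x_h f ⪯_d x_h g`. -/
theorem dominance_mul_var (s : ℕ) (f g : Finset ℕ) (h : ℕ)
    (hf : f.card = s) (hg : g.card = s) (hhf : h ∉ f) (hhg : h ∉ g) :
    DomF s f g ↔ DomF (s + 1) (insert h f) (insert h g) := by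
  subst hf
  have hFc : (insert h f).card = f.card + 1 := Finset.card_insert_of_notMem hhf
  have hGc : (insert h g).card = g.card + 1 := Finset.card_insert_of_notMem hhg
  constructor
  · intro hd ℓ hℓ
    have hdom : ∀ j, 1 ≤ j → j ≤ f.card → T j f ≤ T j g := by
      intro j hj1 hj2
      have := hd (j - 1) (by omega)
      rw [show j - 1 + 1 = j from by omega] at this
      simpa [T, hg] using this
    have := core_forward f g h (ℓ + 1) hg hhf hhg (by omega) (by omega) hdom
    simpa [T, hFc, hGc, hg] using this
  · intro hd ℓ hℓ
    have hdom : ∀ j, 1 ≤ j → j ≤ f.card + 1 → T j (insert h f) ≤ T j (insert h g) := by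
      intro j hj1 hj2
      have := hd (j - 1) (by omega)
      rw [show j - 1 + 1 = j from by omega] at this
      simpa [T, hFc, hGc, hg] using this
    have := core_backward f g h (ℓ + 1) hg hhf hhg (by omega) (by omega) hdom
    simpa [T, hg] using this
end

section
/- For m = 4, the Bernstein coefficients (path counts) of the two degree-16 reliability polynomials satisfy N_i(C^{(0,1,1,0)}) ≤ N_i(C^{(1,0,0,1)}) for all 0 ≤ i ≤ 16, where 1-(1-(1-(1-p)²)⁴)² = ∑_i N_i(C^{(1,0,0,1)}) p^i(1-p)^{16-i} and (1-(1-p²)⁴)² = ∑_i N_i(C^{(0,1,1,0)}) p^i(1-p)^{16-i}; consequently (1-(1-p²)⁴)² ≤ 1-(1-(1-(1-p)²)⁴)² for all p ∈ [0,1]. -/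
open Finset

/-- Bernstein (path-count) coefficients of `C^{(0,1,1,0)}`. -/
def N0110 : Fin 17 → ℝ :=
  ![0, 0, 0, 0, 16, 192, 1008, 3040, 5828, 7456, 6552, 4048, 1788, 560, 120, 16, 1]

/-- Bernstein (path-count) coefficients of `C^{(1,0,0,1)}`. -/
def N1001 : Fin 17 → ℝ :=
  ![0, 0, 0, 0, 32, 320, 1456, 3984, 7042, 8400, 7000, 4176, 1804, 560, 120, 16, 1]

lemma exp0110 (p : ℝ) : (1 - (1 - p ^ 2) ^ 4) ^ 2
    = ∑ i : Fin 17, N0110 i * p ^ (i : ℕ) * (1 - p) ^ (16 - (i : ℕ)) := by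
  simp [Fin.sum_univ_succ, N0110]
  ring

lemma exp1001 (p : ℝ) : 1 - (1 - (1 - (1 - p) ^ 2) ^ 4) ^ 2
    = ∑ i : Fin 17, N1001 i * p ^ (i : ℕ) * (1 - p) ^ (16 - (i : ℕ)) := by
  simp [Fin.sum_univ_succ, N1001]
  ring

/-- The two degree-16 reliability polynomials have the stated Bernstein expansions,
their coefficients are dominated termwise, and hence the polynomials are dominated
pointwise on `[0,1]`. -/
theorem bernstein_coefficients_dominate :
    (∀ p : ℝ, (1 - (1 - p ^ 2) ^ 4) ^ 2
        = ∑ i : Fin 17, N0110 i * p ^ (i : ℕ) * (1 - p) ^ (16 - (i : ℕ))) ∧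
    (∀ p : ℝ, 1 - (1 - (1 - (1 - p) ^ 2) ^ 4) ^ 2
        = ∑ i : Fin 17, N1001 i * p ^ (i : ℕ) * (1 - p) ^ (16 - (i : ℕ))) ∧
    (∀ i : Fin 17, N0110 i ≤ N1001 i) ∧
    (∀ p ∈ Set.Icc (0:ℝ) 1,
      (1 - (1 - p ^ 2) ^ 4) ^ 2 ≤ 1 - (1 - (1 - (1 - p) ^ 2) ^ 4) ^ 2) := by
  have hcoef : ∀ i : Fin 17, N0110 i ≤ N1001 i := by
    intro i; fin_cases i <;> norm_num [N0110, N1001]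
  refine ⟨exp0110, exp1001, hcoef, ?_⟩
  intro p hp
  rw [exp0110, exp1001]
  apply Finset.sum_le_sum
  intro i _
  have h1 : (0:ℝ) ≤ p ^ (i:ℕ) := pow_nonneg hp.1 _
  have h2 : (0:ℝ) ≤ (1 - p) ^ (16 - (i:ℕ)) := pow_nonneg (by linarith [hp.2]) _
  have := hcoef i
  nlinarith [mul_nonneg h1 h2]
end
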